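/- The full subcategory of derived f-complete R-modules is an abelian subcategory of R-modules closed under kernels, cokernels, and extensions. -/

import Mathlib

universe u

/-- An `R`-module `M` is derived `f`-complete if `Hom_R(R[1/f], M) = 0` and
`Ext¹_R(R[1/f], M) = 0`. -/
def IsDerivedFComplete (R : Type u) [CommRing R] (f : R)
    (M : Type u) [AddCommGroup M] [Module R M] : Prop :=
  Subsingleton (Localization.Away f →ₗ[R] M) ∧
    Subsingleton (((Ext R (ModuleCat.{u} R) 1).obj
      (Opposite.op (ModuleCat.of R (Localization.Away f)))).obj (ModuleCat.of R M))

namespace DerivedFCompleteAux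

open CategoryTheory Limits
noncomputable section
variable {R : Type u} [CommRing R] (f : R)

/-- the element `f ^ n` of `Submonoid.powers f`. -/
def fpow (n : ℕ) : Submonoid.powers f := ⟨f ^ n, n, rfl⟩

/-- `T M u n = u n - f • u (n + 1)`. -/
def Tm (M : Type u) [AddCommGroup M] [Module R M] : (ℕ → M) →ₗ[R] (ℕ → M) where
  toFun u := fun n => u n - f • u (n + 1)
  map_add' u v := by funext n; simp [smul_add]; abel
  map_smul' r u := by funext n; simp [smul_sub, smul_comm r f]

variable {M : Type u} [AddCommGroup M] [Module R M] {f}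

lemma seq_pow {u : ℕ → M} (hu : ∀ n, u n = f • u (n + 1)) (n k : ℕ) :
    u n = f ^ k • u (n + k) := by
  induction k with
  | zero => simp
  | succ k ih =>
      rw [ih, hu (n + k), smul_smul, ← pow_succ, ← add_assoc]

lemma seq_eq {u : ℕ → M} (hu : ∀ n, u n = f • u (n + 1)) {r r' : R} {a b j : ℕ}
    (h : f ^ j * (f ^ b * r) = f ^ j * (f ^ a * r')) : r • u a = r' • u b := by
  have h1 : r • u a = (f ^ j * (f ^ b * r)) • u (a + b + j) := by
    rw [seq_pow hu a (b + j), smul_smul, ← add_assoc]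
    congr 1
    ring
  have h2 : r' • u b = (f ^ j * (f ^ a * r')) • u (a + b + j) := by
    rw [seq_pow hu b (a + j), smul_smul]
    rw [show b + (a + j) = a + b + j by omega]
    congr 1
    ring
  rw [h1, h2, h]

/-- the chosen exponent of an element of `Submonoid.powers f`. -/
def fexp (s : Submonoid.powers f) : ℕ := s.2.choose

lemma fexp_spec (s : Submonoid.powers f) : f ^ fexp s = (s : R) := s.2.choose_spec

variable (f) in
/-- The function underlying `ofSeq`. -/
def ofSeqFun (u : ℕ → M) (hu : ∀ n, u n = f • u (n + 1)) :
    Localization.Away f → M := fun x =>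
  Localization.liftOn x (fun r s => r • u (fexp s)) (by
    intro a c b d h
    obtain ⟨e, he⟩ := Localization.r_iff_exists.1 h
    obtain ⟨j, hj⟩ := e.2
    have hj' : f ^ j = (e : R) := hj
    refine seq_eq hu (j := j) ?_
    rw [hj', fexp_spec, fexp_spec]
    exact he)

lemma ofSeqFun_mk (u : ℕ → M) (hu : ∀ n, u n = f • u (n + 1)) (r : R)
    (s : Submonoid.powers f) (n : ℕ) (hn : f ^ n = (s : R)) :
    ofSeqFun f u hu (Localization.mk r s) = r • u n := by
  rw [ofSeqFun, Localization.liftOn_mk]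
  refine seq_eq hu (j := 0) ?_
  rw [fexp_spec, hn]

variable (f) in
/-- The linear map `Localization.Away f →ₗ[R] M` associated to a compatible sequence. -/
def ofSeq (u : ℕ → M) (hu : ∀ n, u n = f • u (n + 1)) :
    Localization.Away f →ₗ[R] M where
  toFun := ofSeqFun f u hu
  map_add' x y := by
    induction x using Localization.induction_on with | _ x => ?_
    induction y using Localization.induction_on with | _ y => ?_
    obtain ⟨a, s⟩ := x
    obtain ⟨c, d⟩ := y
    obtain ⟨m, hm⟩ := s.2
    obtain ⟨k, hk⟩ := d.2
    have hm' : f ^ m = (s : R) := hm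
    have hk' : f ^ k = (d : R) := hk
    rw [Localization.add_mk]
    rw [ofSeqFun_mk u hu _ _ (m + k) (by rw [pow_add, hm', hk']; rfl),
      ofSeqFun_mk u hu a s m hm', ofSeqFun_mk u hu c d k hk']
    rw [add_smul, mul_smul, mul_smul, ← hm', ← hk']
    rw [seq_pow hu m k, seq_pow hu k m, smul_comm (f ^ k)]
    rw [show k + m = m + k by omega, smul_comm (f ^ m) c]
    exact add_comm _ _
  map_smul' r x := by
    induction x using Localization.induction_on with | _ x => ?_
    obtain ⟨a, s⟩ := x
    obtain ⟨m, hm⟩ := s.2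
    have hm' : f ^ m = (s : R) := hm
    show ofSeqFun f u hu (r • Localization.mk a s) = r • ofSeqFun f u hu (Localization.mk a s)
    rw [Localization.smul_mk]
    rw [ofSeqFun_mk u hu _ s m hm', ofSeqFun_mk u hu a s m hm']
    simp [mul_smul]

lemma ofSeq_mk (u : ℕ → M) (hu : ∀ n, u n = f • u (n + 1)) (r : R)
    (s : Submonoid.powers f) (n : ℕ) (hn : f ^ n = (s : R)) :
    ofSeq f u hu (Localization.mk r s) = r • u n :=
  ofSeqFun_mk u hu r s n hn

variable (f) in
lemma mk_one_fpow_succ (n : ℕ) :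
    (Localization.mk 1 (fpow f n) : Localization.Away f) =
      f • Localization.mk 1 (fpow f (n + 1)) := by
  rw [Localization.smul_mk, Localization.mk_eq_mk_iff, Localization.r_iff_exists]
  refine ⟨1, ?_⟩
  show 1 * (f ^ (n + 1) * 1) = 1 * (f ^ n * (f • 1))
  rw [smul_eq_mul]
  ring

lemma hom_eq_zero_of_seq {φ : Localization.Away f →ₗ[R] M}
    (h : ∀ n, φ (Localization.mk 1 (fpow f n)) = 0) : φ = 0 := by
  ext x
  induction x using Localization.induction_on with | _ x => ?_
  obtain ⟨a, s⟩ := x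
  obtain ⟨m, hm⟩ := s.2
  have hm' : f ^ m = (s : R) := hm
  have : (Localization.mk a s : Localization.Away f) = a • Localization.mk 1 (fpow f m) := by
    rw [Localization.smul_mk, smul_eq_mul, mul_one]
    congr 1
    exact Subtype.ext hm'.symm
  show φ _ = 0
  rw [this, map_smul, h m, smul_zero]

variable (f M) in
lemma subsingleton_hom_iff :
    Subsingleton (Localization.Away f →ₗ[R] M) ↔ Function.Injective (Tm f M) := by
  constructor
  · intro hs
    have h0 : ∀ u : ℕ → M, Tm f M u = 0 → u = 0 := by
      intro u hu
      have hu' : ∀ n, u n = f • u (n + 1) := by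
        intro n
        have := congrFun hu n
        simpa [Tm, sub_eq_zero] using this
      have : ofSeq f u hu' = 0 := Subsingleton.elim _ _
      funext n
      have := congrArg (fun ψ => ψ (Localization.mk 1 (fpow f n))) this
      simpa [ofSeq_mk u hu' 1 (fpow f n) n rfl] using this
    intro u v huv
    have : u - v = 0 := h0 _ (by rw [map_sub, huv, sub_self])
    exact sub_eq_zero.mp this
  · intro hinj
    refine subsingleton_of_forall_eq 0 fun φ => ?_
    have hseq : Tm f M (fun n => φ (Localization.mk 1 (fpow f n))) = 0 := by
      funext n
      show φ _ - f • φ _ = 0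
      rw [← map_smul, ← mk_one_fpow_succ f n, sub_self]
    have : (fun n => φ (Localization.mk 1 (fpow f n))) = 0 := by
      apply hinj
      rw [hseq, map_zero]
    exact hom_eq_zero_of_seq (fun n => congrFun this n)

variable (f) in
/-- The map `⊕ℕ R → ⊕ℕ R`, `e n ↦ e n - f • e (n+1)`. -/
def Dmap : (ℕ →₀ R) →ₗ[R] (ℕ →₀ R) :=
  LinearMap.id - f • Finsupp.lmapDomain R R Nat.succ

lemma Dmap_single (n : ℕ) :
    Dmap f (Finsupp.single n (1 : R)) =
      Finsupp.single n 1 - Finsupp.single (n + 1) f := by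
  simp [Dmap, Finsupp.mapDomain_single, Finsupp.smul_single, Nat.succ_eq_add_one]

lemma Dmap_apply_zero (x : ℕ →₀ R) : Dmap f x 0 = x 0 := by
  simp [Dmap, Finsupp.mapDomain_notin_range, fun m => (Nat.succ_ne_zero m)]

lemma Dmap_apply_succ (x : ℕ →₀ R) (m : ℕ) :
    Dmap f x (m + 1) = x (m + 1) - f * x m := by
  have : Finsupp.mapDomain Nat.succ x (m + 1) = x m :=
    Finsupp.mapDomain_apply Nat.succ_injective x m
  simp [Dmap, this]

lemma Dmap_injective : Function.Injective (Dmap f) := by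
  intro x y hxy
  have h : ∀ z : ℕ →₀ R, Dmap f z = 0 → z = 0 := by
    intro z hz
    have h0 : z 0 = 0 := by
      have := congrArg (fun w : ℕ →₀ R => w 0) hz
      simpa [Dmap_apply_zero] using this
    have hs : ∀ m, z (m + 1) = f * z m := by
      intro m
      have := congrArg (fun w : ℕ →₀ R => w (m + 1)) hz
      simp only [Dmap_apply_succ, Finsupp.coe_zero, Pi.zero_apply] at this
      exact sub_eq_zero.mp this
    have hzz : ∀ m, z m = 0 := by
      intro m
      induction m with
      | zero => exact h0
      | succ m ih => rw [hs m, ih, mul_zero]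
    ext m
    rw [hzz]
    rfl
  have : x - y = 0 := h _ (by rw [map_sub, hxy, sub_self])
  exact sub_eq_zero.mp this

variable (f) in
/-- The map `⊕ℕ R → R[1/f]`, `e n ↦ 1/fⁿ`. -/
def pmap : (ℕ →₀ R) →ₗ[R] Localization.Away f :=
  Finsupp.lsum R fun n => LinearMap.toSpanSingleton R _ (Localization.mk 1 (fpow f n))

lemma pmap_single (n : ℕ) (r : R) :
    pmap f (Finsupp.single n r) = Localization.mk r (fpow f n) := by
  simp only [pmap, Finsupp.lsum_single, LinearMap.toSpanSingleton_apply]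
  rw [Localization.smul_mk, smul_eq_mul, mul_one]

lemma pmap_surjective : Function.Surjective (pmap f) := by
  intro x
  induction x using Localization.induction_on with | _ x => ?_
  obtain ⟨a, s⟩ := x
  obtain ⟨m, hm⟩ := s.2
  have hm' : f ^ m = (s : R) := hm
  refine ⟨Finsupp.single m a, ?_⟩
  rw [pmap_single]
  congr 1
  exact Subtype.ext hm'

lemma pmap_comp_Dmap : (pmap f).comp (Dmap f) = 0 := by
  refine Finsupp.lhom_ext' fun n => ?_
  ext
  simp only [LinearMap.comp_apply, Finsupp.lsingle_apply, LinearMap.zero_apply,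
    Dmap_single, map_sub, pmap_single]
  rw [mk_one_fpow_succ f n, sub_eq_zero]
  rw [Localization.smul_mk, smul_eq_mul, mul_one]

lemma ker_pmap_le_range_Dmap :
    LinearMap.ker (pmap f) ≤ LinearMap.range (Dmap f) := by
  intro x hx
  set mkQ := (LinearMap.range (Dmap f)).mkQ with hmkQ
  have hu : ∀ n, mkQ (Finsupp.single n (1 : R)) = f • mkQ (Finsupp.single (n + 1) 1) := by
    intro n
    have hmem : Finsupp.single n (1 : R) - f • Finsupp.single (n + 1) (1 : R) ∈
        LinearMap.range (Dmap f) :=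
      ⟨Finsupp.single n 1, by
        rw [Dmap_single, Finsupp.smul_single, smul_eq_mul, mul_one]⟩
    have h2 : mkQ (Finsupp.single n (1 : R) - f • Finsupp.single (n + 1) (1 : R)) = 0 :=
      (Submodule.Quotient.mk_eq_zero _).mpr hmem
    rw [map_sub, map_smul, sub_eq_zero] at h2
    exact h2
  let φ := ofSeq f (fun n => mkQ (Finsupp.single n 1)) hu
  have hcomp : φ.comp (pmap f) = mkQ := by
    refine Finsupp.lhom_ext fun a b => ?_
    rw [LinearMap.comp_apply, pmap_single]
    have : (Localization.mk b (fpow f a) : Localization.Away f) =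
        b • Localization.mk 1 (fpow f a) := by
      rw [Localization.smul_mk, smul_eq_mul, mul_one]
    rw [this, map_smul, ofSeq_mk _ hu 1 (fpow f a) a rfl, one_smul, ← map_smul]
    rw [Finsupp.smul_single, smul_eq_mul, mul_one]
  have hx0 : mkQ x = 0 := by
    rw [← hcomp, LinearMap.comp_apply, LinearMap.mem_ker.mp hx, map_zero]
  rwa [hmkQ, Submodule.mkQ_apply, Submodule.Quotient.mk_eq_zero] at hx0

variable (f M) in
lemma surj_precomp_iff :
    Function.Surjective (fun φ : (ℕ →₀ R) →ₗ[R] M => φ.comp (Dmap f)) ↔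
      Function.Surjective (Tm f M) := by
  constructor
  · intro h v
    obtain ⟨φ, hφ⟩ := h (Finsupp.lsum R fun n => LinearMap.toSpanSingleton R M (v n))
    have hφ' : φ.comp (Dmap f) =
        Finsupp.lsum R fun n => LinearMap.toSpanSingleton R M (v n) := hφ
    refine ⟨fun n => φ (Finsupp.single n 1), ?_⟩
    funext n
    show φ (Finsupp.single n 1) - f • φ (Finsupp.single (n + 1) 1) = v n
    rw [← map_smul, Finsupp.smul_single, smul_eq_mul, mul_one, ← map_sub, ← Dmap_single n,
      ← LinearMap.comp_apply, hφ']
    simp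
  · intro h ψ
    obtain ⟨u, hu⟩ := h (fun n => ψ (Finsupp.single n 1))
    refine ⟨Finsupp.lsum R fun n => LinearMap.toSpanSingleton R M (u n), ?_⟩
    refine Finsupp.lhom_ext fun n r => ?_
    rw [LinearMap.comp_apply]
    have hsingle : Finsupp.single n r = r • Finsupp.single n (1 : R) := by
      rw [Finsupp.smul_single, smul_eq_mul, mul_one]
    rw [hsingle, map_smul, map_smul, map_smul]
    congr 1
    rw [Dmap_single, map_sub]
    simp only [Finsupp.lsum_single, LinearMap.toSpanSingleton_apply, one_smul]
    exact congrFun hu n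

section Cat

/-- Objects of the resolution. -/
def resX (R' : Type u) [CommRing R'] : ℕ → ModuleCat.{u} R'
  | 0 => ModuleCat.of R' (ℕ →₀ R')
  | 1 => ModuleCat.of R' (ℕ →₀ R')
  | _ + 2 => ModuleCat.of R' PUnit

variable (f) in
/-- Differentials of the resolution. -/
def resd : ∀ n, resX R (n + 1) ⟶ resX R n
  | 0 => ModuleCat.ofHom (Dmap f)
  | _ + 1 => 0

variable (f) in
/-- The resolution complex of `R[1/f]`. -/
def resC : ChainComplex (ModuleCat.{u} R) ℕ :=
  ChainComplex.of (resX R) (resd f) (by rintro (_ | n) <;>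
    simp [resd, CategoryTheory.Limits.zero_comp] <;> exact CategoryTheory.Limits.zero_comp)

instance (n : ℕ) : CategoryTheory.Projective ((resC f).X n) := by
  obtain (_ | _ | n) := n
  · exact ModuleCat.projective_of_free Finsupp.basisSingleOne
  · exact ModuleCat.projective_of_free Finsupp.basisSingleOne
  · show CategoryTheory.Projective (ModuleCat.of R PUnit)
    exact (ModuleCat.isZero_of_subsingleton _).projective

lemma resC_d_1_0 : (resC f).d 1 0 = (ModuleCat.ofHom (Dmap f) : resX R 1 ⟶ resX R 0) :=
  ChainComplex.of_d (resX R) (resd f) 0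

variable (f) in
/-- The augmentation map of the resolution. -/
def resπ : resC f ⟶ (ChainComplex.single₀ (ModuleCat.{u} R)).obj
    (ModuleCat.of R (Localization.Away f)) :=
  (ChainComplex.toSingle₀Equiv _ _).symm
    ⟨(ModuleCat.ofHom (pmap f) : resX R 0 ⟶ ModuleCat.of R (Localization.Away f)), by
      rw [resC_d_1_0]
      exact ModuleCat.hom_ext pmap_comp_Dmap⟩

lemma resπ_f_zero : (resπ f).f 0 = (ModuleCat.ofHom (pmap f) : resX R 0 ⟶ ModuleCat.of R (Localization.Away f)) :=
  ChainComplex.toSingle₀Equiv_symm_apply_f_zero _ _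

lemma resC_exactAt_succ (n : ℕ) : (resC f).ExactAt (n + 1) := by
  rw [HomologicalComplex.exactAt_iff' _ (n + 2) (n + 1) n (by simp) (by simp)]
  cases n with
  | zero =>
    apply (ShortComplex.exact_iff_mono _ ?_).mpr
    · show CategoryTheory.Mono ((resC f).d 1 0)
      rw [resC_d_1_0]
      exact (ModuleCat.mono_iff_injective _).mpr Dmap_injective
    · show (resC f).d 2 1 = 0
      exact ChainComplex.of_d (resX R) (resd f) 1
  | succ n =>
    refine ShortComplex.exact_of_isZero_X₂ _ ?_
    show CategoryTheory.Limits.IsZero (ModuleCat.of R PUnit)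
    exact ModuleCat.isZero_of_subsingleton _

variable (f) in
/-- The projective resolution of `R[1/f]`. -/
def resolution :
    CategoryTheory.ProjectiveResolution
      (ModuleCat.of R (Localization.Away f)) where
  complex := resC f
  π := resπ f
  quasiIso := ⟨fun n => by
    cases n with
    | zero =>
      rw [ChainComplex.quasiIsoAt₀_iff, ShortComplex.quasiIso_iff_of_zeros']
      · constructor
        · rw [ShortComplex.moduleCat_exact_iff]
          intro x hx
          have hx' : pmap f x = 0 := by
            have h2 := resπ_f_zero (f := f)
            dsimp at hx ⊢
            simp [h2] at hx
            exact hx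
          obtain ⟨y, hy⟩ := ker_pmap_le_range_Dmap (LinearMap.mem_ker.mpr hx')
          refine ⟨y, ?_⟩
          show ((resC f).d 1 0).hom y = x
          rw [resC_d_1_0]
          exact hy
        · have h2 := resπ_f_zero (f := f)
          show CategoryTheory.Epi ((resπ f).f 0)
          rw [ModuleCat.epi_iff_surjective, h2]
          exact pmap_surjective
      all_goals rfl
    | succ n =>
      rw [quasiIsoAt_iff_exactAt']
      · exact resC_exactAt_succ n
      · apply ChainComplex.exactAt_succ_single_obj⟩

end Cat

variable (f M) in
lemma subsingleton_ext_iff :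
    Subsingleton (((Ext R (ModuleCat.{u} R) 1).obj
      (Opposite.op (ModuleCat.of R (Localization.Away f)))).obj (ModuleCat.of R M)) ↔
      Function.Surjective (Tm f M) := by
  classical
  let K := (resC f).linearYonedaObj R (ModuleCat.of R M)
  let e : (((Ext R (ModuleCat.{u} R) 1).obj
      (Opposite.op (ModuleCat.of R (Localization.Away f)))).obj (ModuleCat.of R M)) ≅
      K.homology 1 :=
    (resolution f).isoExt 1 (ModuleCat.of R M)
  have step1 : Subsingleton (((Ext R (ModuleCat.{u} R) 1).obj
      (Opposite.op (ModuleCat.of R (Localization.Away f)))).obj (ModuleCat.of R M)) ↔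
      Subsingleton (K.homology 1) :=
    Equiv.subsingleton_congr ((forget (ModuleCat.{u} R)).mapIso e).toEquiv
  have hsub2 : Subsingleton (K.X 2) :=
    ⟨fun a b => ModuleCat.hom_ext (Subsingleton.elim (α := PUnit.{u+1} →ₗ[R] M) _ _)⟩
  have hg : K.d 1 2 = 0 :=
    (ModuleCat.isZero_of_subsingleton (K.X 2)).eq_of_tgt _ _
  have step3 : K.ExactAt 1 ↔ CategoryTheory.Epi (K.d 0 1) := by
    rw [HomologicalComplex.exactAt_iff' K 0 1 2 (by simp) (by simp)]
    exact ShortComplex.exact_iff_epi _ hg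
  have step2 : Subsingleton (K.homology 1) ↔ K.ExactAt 1 := by
    constructor
    · intro h
      rw [HomologicalComplex.exactAt_iff_isZero_homology]
      exact ModuleCat.isZero_of_subsingleton _
    · intro h
      rw [HomologicalComplex.exactAt_iff_isZero_homology] at h
      exact Equiv.subsingleton_congr
        ((forget (ModuleCat.{u} R)).mapIso
          (h.iso (ModuleCat.isZero_of_subsingleton (ModuleCat.of R PUnit)))).toEquiv |>.mpr
        (inferInstanceAs (Subsingleton PUnit.{u+1}))
  have hfun : ⇑(K.d 0 1) = (fun φ : resX R 0 ⟶ ModuleCat.of R M =>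
      (ModuleCat.ofHom (Dmap f) : resX R 1 ⟶ resX R 0) ≫ φ) := by
    funext φ
    show (resC f).d 1 0 ≫ φ = ModuleCat.ofHom (Dmap f) ≫ φ
    rw [resC_d_1_0]
    rfl
  rw [step1, step2, step3, ModuleCat.epi_iff_surjective, hfun, ← surj_precomp_iff f M]
  constructor
  · intro h ψ
    obtain ⟨φ, hφ⟩ := h (ModuleCat.ofHom ψ)
    exact ⟨φ.hom, congrArg ModuleCat.Hom.hom hφ⟩
  · intro h ψ
    obtain ⟨φ, hφ⟩ := h ψ.hom
    exact ⟨ModuleCat.ofHom φ, ModuleCat.hom_ext hφ⟩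

/-- Compatibility of `Tm` with a linear map. -/
lemma Tm_comp {N : Type u} [AddCommGroup N] [Module R N] (h : M →ₗ[R] N) (u : ℕ → M) :
    Tm f N (fun n => h (u n)) = fun n => h (Tm f M u n) := by
  funext n
  show h (u n) - f • h (u (n + 1)) = h (u n - f • u (n + 1))
  rw [map_sub, map_smul]

lemma Tm_injective_of_ker {M : Type u} [AddCommGroup M] [Module R M]
    (h : ∀ u : ℕ → M, Tm f M u = 0 → u = 0) : Function.Injective (Tm f M) := by
  intro u v huv
  have : u - v = 0 := h _ (by rw [map_sub, huv, sub_self])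
  exact sub_eq_zero.mp this

variable (f M) in
lemma key_iff : IsDerivedFComplete R f M ↔ Function.Bijective (Tm f M) :=
  Iff.trans (and_congr (subsingleton_hom_iff f M) (subsingleton_ext_iff f M)) Iff.rfl

end

end DerivedFCompleteAux

open DerivedFCompleteAux in
/-- The derived `f`-complete `R`-modules form an abelian subcategory of the
category of `R`-modules: they are closed under kernels, cokernels, and
extensions. -/
theorem derived_f_complete_closed_ker_coker_extensions
    (R : Type u) [CommRing R] (f : R) :
    (∀ (M N : Type u) [AddCommGroup M] [Module R M] [AddCommGroup N] [Module R N]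
        (g : M →ₗ[R] N), IsDerivedFComplete R f M → IsDerivedFComplete R f N →
        IsDerivedFComplete R f (LinearMap.ker g)) ∧
    (∀ (M N : Type u) [AddCommGroup M] [Module R M] [AddCommGroup N] [Module R N]
        (g : M →ₗ[R] N), IsDerivedFComplete R f M → IsDerivedFComplete R f N →
        IsDerivedFComplete R f (N ⧸ LinearMap.range g)) ∧
    (∀ (A B C : Type u) [AddCommGroup A] [Module R A] [AddCommGroup B] [Module R B]
        [AddCommGroup C] [Module R C] (i : A →ₗ[R] B) (π : B →ₗ[R] C),
        Function.Injective i → Function.Surjective π → Function.Exact i π →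
        IsDerivedFComplete R f A → IsDerivedFComplete R f C →
        IsDerivedFComplete R f B) := by
  classical
  refine ⟨?_, ?_, ?_⟩
  · -- kernels
    intro M N _ _ _ _ g hM hN
    rw [key_iff] at hM hN ⊢
    constructor
    · apply Tm_injective_of_ker
      intro u hu
      have h1 : Tm f M (fun n => (u n : M)) = 0 := by
        show ((Tm f M) fun n => (LinearMap.ker g).subtype (u n)) = 0
        rw [Tm_comp (f := f) ((LinearMap.ker g).subtype) u]
        funext n
        rw [hu]
        simp
      have h2 : (fun n => (u n : M)) = 0 := hM.1 (by rw [h1, map_zero])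
      funext n
      exact Subtype.ext (congrFun h2 n)
    · intro w
      obtain ⟨v, hv⟩ := hM.2 (fun n => (w n : M))
      have h2 : Tm f N (fun n => g (v n)) = 0 := by
        rw [Tm_comp (f := f) g v, hv]
        funext n
        simpa using (w n).2
      have h3 : (fun n => g (v n)) = 0 := hN.1 (by rw [h2, map_zero])
      refine ⟨fun n => ⟨v n, LinearMap.mem_ker.mpr (congrFun h3 n)⟩, ?_⟩
      funext n
      refine Subtype.ext ?_
      show v n - f • v (n + 1) = (w n : M)
      exact congrFun hv n
  · -- cokernels
    intro M N _ _ _ _ g hM hN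
    rw [key_iff] at hM hN ⊢
    set Q := N ⧸ LinearMap.range g
    set mkQ := (LinearMap.range g).mkQ with hmkQ
    have hmkQs : Function.Surjective mkQ := Submodule.mkQ_surjective _
    constructor
    · apply Tm_injective_of_ker
      intro u hu
      -- lift u pointwise
      set x : ℕ → N := fun n => (hmkQs (u n)).choose with hx
      have hxspec : ∀ n, mkQ (x n) = u n := fun n => (hmkQs (u n)).choose_spec
      have h1 : ∀ n, Tm f N x n ∈ LinearMap.range g := by
        intro n
        have : mkQ (Tm f N x n) = 0 := by
          have := congrFun (Tm_comp (f := f) mkQ x) n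
          show mkQ (x n - f • x (n + 1)) = 0
          rw [map_sub, map_smul, hxspec, hxspec]
          have := congrFun hu n
          simpa [Tm] using this
        rwa [hmkQ, Submodule.mkQ_apply, Submodule.Quotient.mk_eq_zero] at this
      set w : ℕ → M := fun n => (h1 n).choose with hw
      have hwspec : ∀ n, g (w n) = Tm f N x n := fun n => (h1 n).choose_spec
      obtain ⟨a, ha⟩ := hM.2 w
      have h4 : Tm f N (fun n => g (a n)) = Tm f N x := by
        rw [Tm_comp (f := f) g a, ha]
        funext n
        exact hwspec n
      have h5 : (fun n => g (a n)) = x := hN.1 h4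
      funext n
      rw [← hxspec n, ← congrFun h5 n, hmkQ, Submodule.mkQ_apply]
      show _ = (0 : Q)
      rw [Submodule.Quotient.mk_eq_zero]
      exact ⟨a n, rfl⟩
    · intro w
      set v : ℕ → N := fun n => (hmkQs (w n)).choose with hv
      have hvspec : ∀ n, mkQ (v n) = w n := fun n => (hmkQs (w n)).choose_spec
      obtain ⟨x, hxv⟩ := hN.2 v
      refine ⟨fun n => mkQ (x n), ?_⟩
      rw [Tm_comp (f := f) mkQ x, hxv]
      funext n
      exact hvspec n
  · -- extensions
    intro A B C _ _ _ _ _ _ i π hi hπ hexact hA hC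
    rw [key_iff] at hA hC ⊢
    constructor
    · apply Tm_injective_of_ker
      intro v hv
      have h1 : Tm f C (fun n => π (v n)) = 0 := by
        rw [Tm_comp (f := f) π v, hv]
        funext n
        simp
      have h2 : (fun n => π (v n)) = 0 := hC.1 (by rw [h1, map_zero])
      have h3 : ∀ n, v n ∈ Set.range i := fun n => (hexact (v n)).mp (congrFun h2 n)
      set w : ℕ → A := fun n => (h3 n).choose with hwdef
      have hwspec : ∀ n, i (w n) = v n := fun n => (h3 n).choose_spec
      have h4 : (fun n => i (Tm f A w n)) = Tm f B v := by
        rw [← Tm_comp (f := f) i w]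
        congr 1
        funext n
        exact hwspec n
      have h5 : Tm f A w = 0 := by
        funext n
        apply hi
        show i (Tm f A w n) = i ((0 : ℕ → A) n)
        rw [congrFun h4 n, hv]
        show (0 : ℕ → B) n = i ((0 : ℕ → A) n)
        show (0 : B) = i 0
        rw [map_zero]
      have h6 : w = 0 := hA.1 (by rw [h5, map_zero])
      funext n
      rw [← hwspec n, congrFun h6 n]
      show i 0 = (0 : ℕ → B) n
      rw [map_zero]
      rfl
    · intro u
      choose s hs using hπ
      obtain ⟨c, hc⟩ := hC.2 (fun n => π (u n))
      have h1 : ∀ n, π (u n - Tm f B (fun k => s (c k)) n) = 0 := by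
        intro n
        rw [map_sub]
        have h2 : π (Tm f B (fun k => s (c k)) n) = Tm f C c n := by
          have h3 := congrFun (Tm_comp (f := f) π (fun k => s (c k))) n
          rw [← h3]
          have hbb : (fun k => π (s (c k))) = c := funext fun k => hs (c k)
          rw [hbb]
        rw [h2, congrFun hc n, sub_self]
      have h2 : ∀ n, ∃ x, i x = u n - Tm f B (fun k => s (c k)) n :=
        fun n => (hexact _).mp (h1 n)
      choose a' ha' using h2
      obtain ⟨a, ha⟩ := hA.2 a'
      refine ⟨fun n => s (c n) + i (a n), ?_⟩
      funext n
      show (s (c n) + i (a n)) - f • (s (c (n + 1)) + i (a (n + 1))) = u n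
      have e1 : i (a n) - f • i (a (n + 1)) = i (Tm f A a n) := by
        show _ = i (a n - f • a (n + 1))
        rw [map_sub, map_smul]
      have e4 : s (c n) - f • s (c (n + 1)) = Tm f B (fun k => s (c k)) n := rfl
      have e2 : i (Tm f A a n) = u n - Tm f B (fun k => s (c k)) n := by
        rw [congrFun ha n]
        exact ha' n
      calc (s (c n) + i (a n)) - f • (s (c (n + 1)) + i (a (n + 1)))
          = (s (c n) - f • s (c (n + 1))) + (i (a n) - f • i (a (n + 1))) := by
            rw [smul_add]
            abel
        _ = Tm f B (fun k => s (c k)) n + i (Tm f A a n) := by rw [e1, e4]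
        _ = u n := by rw [e2]; abel
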